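/- Let F(q) = Σ_{n≥0} f_n qⁿ be a formal power series over F₂ with f₀ = 1, let F̄(q) = Σ_{n≥0} f̄_n qⁿ be its inverse, and let F = {m ∈ ℕ : f_m = 1} (so 0 ∈ F). Then for every n ≥ 1, f̄_n = 1 if and only if the number of finitely supported sequences (x₀, x₁, x₂, …) of nonnegative integers with every x_i ∈ F and n = Σ_{i≥0} x_i·2^i is odd. -/

import Mathlib

open PowerSeries Finset

namespace Stmt3Aux

lemma zmod2_add_self (x : ZMod 2) : x + x = 0 := by revert x; decide
lemma zmod2_mul_self (x : ZMod 2) : x * x = x := by revert x; decide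
lemma zmod2_cases (x : ZMod 2) : x = 0 ∨ x = 1 := by revert x; decide

/-- Squaring a power series over `F₂` doubles exponents. -/
lemma coeff_sq (A : PowerSeries (ZMod 2)) (n : ℕ) :
    PowerSeries.coeff n (A * A) =
      if 2 ∣ n then PowerSeries.coeff (n / 2) A else 0 := by
  classical
  rw [PowerSeries.coeff_mul]
  by_cases h : 2 ∣ n
  · obtain ⟨k, rfl⟩ := h
    rw [if_pos ⟨k, rfl⟩]
    have hk : ((k, k) : ℕ × ℕ) ∈ Finset.HasAntidiagonal.antidiagonal (2 * k) := by
      simp [Finset.HasAntidiagonal.mem_antidiagonal]; ring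
    rw [← Finset.add_sum_erase _ _ hk]
    have hz : ∑ p ∈ (Finset.HasAntidiagonal.antidiagonal (2 * k)).erase (k, k),
        (PowerSeries.coeff p.1 A) * (PowerSeries.coeff p.2 A) = 0 := by
      apply Finset.sum_involution (g := fun p _ => (p.2, p.1))
      · intro p _
        dsimp only
        rw [mul_comm]
        exact zmod2_add_self _
      · intro p hp _ hfix
        have h1 : p.2 = p.1 := congrArg Prod.fst hfix
        have h2 : p.1 + p.2 = 2 * k := (Finset.HasAntidiagonal.mem_antidiagonal.mp (Finset.mem_of_mem_erase hp))
        have : p = (k, k) := by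
          have : p.1 = k := by omega
          have h2' : p.2 = k := by omega
          exact Prod.ext this h2'
        exact absurd this (Finset.ne_of_mem_erase hp)
      · intro p hp
        have h2 : p.1 + p.2 = 2 * k := (Finset.HasAntidiagonal.mem_antidiagonal.mp (Finset.mem_of_mem_erase hp))
        refine Finset.mem_erase.mpr ⟨?_, Finset.HasAntidiagonal.mem_antidiagonal.mpr (by omega)⟩
        intro hc
        exact (Finset.ne_of_mem_erase hp) (by
          have h1 : p.2 = k := congrArg Prod.fst hc
          have h2' : p.1 = k := congrArg Prod.snd hc
          exact Prod.ext h2' h1)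
      · intro p _; rfl
    rw [hz, add_zero]
    have : (2 * k) / 2 = k := by omega
    rw [this, zmod2_mul_self]
  · rw [if_neg h]
    apply Finset.sum_involution (g := fun p _ => (p.2, p.1))
    · intro p _
      dsimp only
      rw [mul_comm]
      exact zmod2_add_self _
    · intro p hp _ hfix
      have h1 : p.2 = p.1 := congrArg Prod.fst hfix
      have h2 : p.1 + p.2 = n := Finset.HasAntidiagonal.mem_antidiagonal.mp hp
      exact h ⟨p.1, by omega⟩
    · intro p hp
      have h2 : p.1 + p.2 = n := Finset.HasAntidiagonal.mem_antidiagonal.mp hp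
      exact Finset.HasAntidiagonal.mem_antidiagonal.mpr (by omega)
    · intro p _; rfl

/-- The weighted sum `Σ xᵢ 2^i`. -/
def wsum (x : ℕ →₀ ℕ) : ℕ := x.sum fun i xi => xi * 2 ^ i

def S (f : ℕ → ZMod 2) (n : ℕ) : Set (ℕ →₀ ℕ) :=
  {x | (∀ i : ℕ, f (x i) = 1) ∧ wsum x = n}

lemma term_le_wsum (x : ℕ →₀ ℕ) (i : ℕ) : x i * 2 ^ i ≤ wsum x := by
  by_cases h : i ∈ x.support
  · exact Finset.single_le_sum (f := fun j => x j * 2 ^ j) (fun j _ => Nat.zero_le _) h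
  · have : x i = 0 := Finsupp.notMem_support_iff.mp h
    simp [this]

lemma S_finite (f : ℕ → ZMod 2) (n : ℕ) : (S f n).Finite := by
  apply Set.Finite.subset (Finset.finite_toSet
    ((Finset.range (n + 1)).finsupp fun _ => Finset.range (n + 1)))
  intro x hx
  obtain ⟨-, hw⟩ := hx
  simp only [Finset.coe_sort_coe, Finset.mem_coe, Finset.mem_finsupp_iff]
  constructor
  · intro i hi
    have hxi : x i ≠ 0 := Finsupp.mem_support_iff.mp hi
    have h1 : 2 ^ i ≤ x i * 2 ^ i := Nat.le_mul_of_pos_left _ (Nat.pos_of_ne_zero hxi)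
    have h2 := term_le_wsum x i
    have h3 : i < 2 ^ i := Nat.lt_two_pow_self
    rw [hw] at h2
    exact Finset.mem_range.mpr (by omega)
  · intro i _
    have h2 := term_le_wsum x i
    have h1 : x i ≤ x i * 2 ^ i := Nat.le_mul_of_pos_right _ (Nat.pow_pos (by norm_num))
    rw [hw] at h2
    exact Finset.mem_range.mpr (by omega)

def succEmb : ℕ ↪ ℕ := ⟨Nat.succ, Nat.succ_injective⟩

noncomputable def cons (a : ℕ) (y : ℕ →₀ ℕ) : ℕ →₀ ℕ :=
  Finsupp.single 0 a + Finsupp.embDomain succEmb y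

noncomputable def tail (x : ℕ →₀ ℕ) : ℕ →₀ ℕ :=
  Finsupp.comapDomain Nat.succ x (Nat.succ_injective.injOn)

@[simp] lemma tail_apply (x : ℕ →₀ ℕ) (i : ℕ) : tail x i = x (i + 1) := rfl

@[simp] lemma cons_zero (a : ℕ) (y : ℕ →₀ ℕ) : cons a y 0 = a := by
  have h0 : (0 : ℕ) ∉ Set.range succEmb := by
    rintro ⟨i, hi⟩
    exact Nat.succ_ne_zero i hi
  simp [cons, Finsupp.embDomain_notin_range _ _ _ h0]

@[simp] lemma cons_succ (a : ℕ) (y : ℕ →₀ ℕ) (i : ℕ) : cons a y (i + 1) = y i := by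
  have : Finsupp.embDomain succEmb y (i + 1) = y i := Finsupp.embDomain_apply_self succEmb y i
  simp [cons, this, Finsupp.single_apply, Nat.succ_ne_zero]

lemma cons_tail (x : ℕ →₀ ℕ) : cons (x 0) (tail x) = x := by
  ext i
  cases i with
  | zero => simp
  | succ j => simp

lemma cons_injective (a : ℕ) : Function.Injective (cons a) := by
  intro y y' h
  ext i
  have := congrArg (fun z : ℕ →₀ ℕ => z (i + 1)) h
  simpa using this

lemma wsum_cons (a : ℕ) (y : ℕ →₀ ℕ) : wsum (cons a y) = a + 2 * wsum y := by
  unfold cons wsum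
  rw [Finsupp.sum_add_index' (fun i => by simp) (fun i b1 b2 => add_mul b1 b2 _)]
  congr 1
  · rw [Finsupp.sum_single_index (by simp)]
    simp
  · rw [Finsupp.sum_embDomain]
    rw [Finsupp.mul_sum]
    apply Finsupp.sum_congr
    intro i _
    simp [succEmb, pow_succ, Nat.succ_eq_add_one]
    ring

noncomputable def g (f : ℕ → ZMod 2) (n : ℕ) : ℕ := (S f n).ncard

lemma g_rec (f : ℕ → ZMod 2) (n : ℕ) :
    g f n = ∑ a ∈ Finset.range (n + 1),
      if f a = 1 ∧ 2 ∣ (n - a) then g f ((n - a) / 2) else 0 := by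
  classical
  have key : (S_finite f n).toFinset = (Finset.range (n + 1)).biUnion
      (fun a => if f a = 1 ∧ 2 ∣ (n - a)
        then ((S_finite f ((n - a) / 2)).toFinset).image (cons a) else ∅) := by
    ext x
    simp only [Set.Finite.mem_toFinset, Finset.mem_biUnion]
    constructor
    · rintro ⟨h1, h2⟩
      refine ⟨x 0, ?_, ?_⟩
      · have := term_le_wsum x 0
        rw [h2] at this
        simp only [pow_zero, mul_one] at this
        exact Finset.mem_range.mpr (by omega)
      · have ha : x 0 ≤ n := by
          have := term_le_wsum x 0
          rw [h2] at this; simpa using this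
        have hw : wsum x = x 0 + 2 * wsum (tail x) := by
          conv_lhs => rw [← cons_tail x]
          rw [wsum_cons]
        have hdvd : 2 ∣ (n - x 0) := ⟨wsum (tail x), by omega⟩
        have hdiv : (n - x 0) / 2 = wsum (tail x) := by omega
        rw [if_pos ⟨h1 0, hdvd⟩]
        refine Finset.mem_image.mpr ⟨tail x, ?_, cons_tail x⟩
        rw [Set.Finite.mem_toFinset]
        refine ⟨fun i => ?_, hdiv.symm⟩
        rw [tail_apply]
        exact h1 (i + 1)
    · rintro ⟨a, ha, hx⟩
      have ha' : a ≤ n := by have := Finset.mem_range.mp ha; omega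
      by_cases hc : f a = 1 ∧ 2 ∣ (n - a)
      · rw [if_pos hc] at hx
        obtain ⟨y, hy, rfl⟩ := Finset.mem_image.mp hx
        rw [Set.Finite.mem_toFinset] at hy
        obtain ⟨hy1, hy2⟩ := hy
        constructor
        · intro i
          cases i with
          | zero => simpa using hc.1
          | succ j => simpa using hy1 j
        · rw [wsum_cons, hy2]
          obtain ⟨k, hk⟩ := hc.2
          omega
      · rw [if_neg hc] at hx
        exact absurd hx (Finset.notMem_empty _)
  have hdisj : ∀ a ∈ Finset.range (n + 1), ∀ b ∈ Finset.range (n + 1), a ≠ b →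
      Disjoint (if f a = 1 ∧ 2 ∣ (n - a)
          then ((S_finite f ((n - a) / 2)).toFinset).image (cons a) else ∅)
        (if f b = 1 ∧ 2 ∣ (n - b)
          then ((S_finite f ((n - b) / 2)).toFinset).image (cons b) else ∅) := by
    intro a _ b _ hab
    rw [Finset.disjoint_left]
    intro x hxa hxb
    by_cases h1 : f a = 1 ∧ 2 ∣ (n - a)
    case neg => rw [if_neg h1] at hxa; exact absurd hxa (Finset.notMem_empty _)
    by_cases h2 : f b = 1 ∧ 2 ∣ (n - b)
    case neg => rw [if_neg h2] at hxb; exact absurd hxb (Finset.notMem_empty _)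
    rw [if_pos h1] at hxa
    rw [if_pos h2] at hxb
    · obtain ⟨y, _, rfl⟩ := Finset.mem_image.mp hxa
      obtain ⟨z, _, hz⟩ := Finset.mem_image.mp hxb
      have := congrArg (fun w : ℕ →₀ ℕ => w 0) hz
      simp at this
      exact hab this.symm
  have hcard : g f n = (S_finite f n).toFinset.card := Set.ncard_eq_toFinset_card _ _
  rw [hcard, key, Finset.card_biUnion hdisj]
  apply Finset.sum_congr rfl
  intro a _
  split_ifs with h
  · rw [Finset.card_image_of_injective _ (cons_injective a)]
    exact (Set.ncard_eq_toFinset_card _ _).symm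
  · simp

lemma g_zero (f : ℕ → ZMod 2) (hf0 : f 0 = 1) : g f 0 = 1 := by
  have : S f 0 = {0} := by
    ext x
    constructor
    · rintro ⟨-, h2⟩
      have hx : ∀ i, x i = 0 := by
        intro i
        have := term_le_wsum x i
        rw [h2] at this
        have hp : 0 < 2 ^ i := Nat.pow_pos (by norm_num)
        nlinarith [Nat.eq_zero_of_le_zero this]
      exact Finsupp.ext hx
    · rintro rfl
      refine ⟨fun i => by simpa using hf0, ?_⟩
      simp [wsum]
  rw [g, this, Set.ncard_singleton]

noncomputable def G (f : ℕ → ZMod 2) : ℕ → ZMod 2 := fun n => ((g f n : ℕ) : ZMod 2)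

lemma G_series (f : ℕ → ZMod 2) :
    PowerSeries.mk (G f) = PowerSeries.mk f * (PowerSeries.mk (G f) * PowerSeries.mk (G f)) := by
  classical
  ext n
  rw [coeff_mk, PowerSeries.coeff_mul]
  have hsq : ∀ p : ℕ × ℕ, p ∈ Finset.HasAntidiagonal.antidiagonal n →
      (PowerSeries.coeff p.1 (PowerSeries.mk f)) *
        (PowerSeries.coeff p.2 (PowerSeries.mk (G f) * PowerSeries.mk (G f)))
      = f p.1 * (if 2 ∣ p.2 then G f (p.2 / 2) else 0) := by
    intro p _
    rw [coeff_mk, coeff_sq, coeff_mk]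
  rw [Finset.sum_congr rfl hsq]
  rw [Finset.Nat.sum_antidiagonal_eq_sum_range_succ
    (fun a b => f a * (if 2 ∣ b then G f (b / 2) else 0))]
  have hG : G f n = ∑ a ∈ Finset.range (n + 1),
      if f a = 1 ∧ 2 ∣ (n - a) then G f ((n - a) / 2) else 0 := by
    rw [G, g_rec]
    push_cast
    apply Finset.sum_congr rfl
    intro a _
    split_ifs <;> simp [G]
  rw [hG]
  apply Finset.sum_congr rfl
  intro a _
  rcases zmod2_cases (f a) with h | h
  · rw [h, zero_mul]
    rw [if_neg (by simp [h])]
  · rw [h, one_mul]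
    by_cases hd : 2 ∣ (n - a)
    · rw [if_pos hd, if_pos ⟨rfl, hd⟩]
    · rw [if_neg hd, if_neg (by tauto)]

lemma H_one (f : ℕ → ZMod 2) (hf0 : f 0 = 1) :
    PowerSeries.mk f * PowerSeries.mk (G f) = 1 := by
  set H := PowerSeries.mk f * PowerSeries.mk (G f) with hH
  have hH2 : H = H * H := by
    rw [hH]
    conv_lhs => rw [G_series f]
    ring
  have h0 : PowerSeries.coeff 0 H = 1 := by
    rw [hH, PowerSeries.coeff_mul]
    simp [coeff_mk, G, g_zero f hf0, hf0]
  have hn : ∀ n : ℕ, 1 ≤ n → PowerSeries.coeff n H = 0 := by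
    intro n
    induction n using Nat.strong_induction_on with
    | _ n ih =>
      intro hn
      rw [hH2, coeff_sq]
      by_cases hd : 2 ∣ n
      · rw [if_pos hd]
        exact ih (n / 2) (by omega) (by omega)
      · rw [if_neg hd]
  ext m
  rw [PowerSeries.coeff_one]
  rcases Nat.eq_zero_or_pos m with rfl | hm
  · simpa using h0
  · rw [if_neg (by omega)]
    exact hn m hm

theorem main (f fbar : ℕ → ZMod 2) (hf0 : f 0 = 1)
    (hinv : PowerSeries.mk f * PowerSeries.mk fbar = 1) (n : ℕ) :
    fbar n = ((g f n : ℕ) : ZMod 2) := by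
  have h1 : PowerSeries.mk fbar = PowerSeries.mk (G f) := by
    calc PowerSeries.mk fbar
        = PowerSeries.mk fbar * (PowerSeries.mk f * PowerSeries.mk (G f)) := by
          rw [H_one f hf0, mul_one]
    _ = (PowerSeries.mk f * PowerSeries.mk fbar) * PowerSeries.mk (G f) := by ring
    _ = PowerSeries.mk (G f) := by rw [hinv, one_mul]
  have := congrArg (PowerSeries.coeff n) h1
  simpa [coeff_mk, G] using this

lemma cast_eq_one_iff_odd (m : ℕ) : ((m : ZMod 2) = 1) ↔ Odd m := by
  rw [Nat.odd_iff, ← ZMod.natCast_mod m 2]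
  rcases Nat.mod_two_eq_zero_or_one m with h | h <;> rw [h]
  · constructor <;> intro hc <;> [exact absurd hc (by decide); omega]
  · constructor <;> intro _ <;> [rfl; decide]

end Stmt3Aux

/-- Let `F(q) = Σ f_n qⁿ ∈ F₂[[q]]` with `f₀ = 1`, with inverse `F̄(q) = Σ f̄_n qⁿ`, and let
`F = {m : f_m = 1}` (so `0 ∈ F`). For every `n ≥ 1`, `f̄_n = 1` iff the number of finitely
supported sequences `(x₀, x₁, …)` of nonnegative integers with every `x_i ∈ F` and
`n = Σ_i x_i 2^i` is odd. -/
theorem stmt3 (f fbar : ℕ → ZMod 2) (hf0 : f 0 = 1)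
    (hinv : PowerSeries.mk f * PowerSeries.mk fbar = 1) (n : ℕ) (hn : 1 ≤ n) :
    fbar n = 1 ↔
      Odd (Set.ncard {x : ℕ →₀ ℕ |
        (∀ i : ℕ, f (x i) = 1) ∧ (x.sum fun i xi => xi * 2 ^ i) = n}) := by
  have hset : {x : ℕ →₀ ℕ |
      (∀ i : ℕ, f (x i) = 1) ∧ (x.sum fun i xi => xi * 2 ^ i) = n} = Stmt3Aux.S f n := rfl
  rw [hset]
  rw [Stmt3Aux.main f fbar hf0 hinv n]
  exact Stmt3Aux.cast_eq_one_iff_odd _
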